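/- Let p be a prime, R a commutative F_p-algebra, λ, a, c ∈ R with a^p + λ^p c invertible in R, C̃ = R[X]/(X^p - c), and B̃ = R[T]/(T^p) the Hopf algebra with Δ(T) = T⊗1+1⊗T+λT⊗T. Give C̃ the right B̃-comodule algebra structure ρ(X) = X⊗1 + a⊗T + λX⊗T. Then the canonical map C̃ ⊗_R C̃ → C̃ ⊗_R B̃, determined by X⊗1 ↦ X⊗1 and 1⊗X ↦ X⊗1 + a⊗T + λX⊗T, is an isomorphism of R-algebras (so C̃ is a Γ^{(λ)}-torsor, as C̃ is free of rank p, hence faithfully flat over R). -/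

import Mathlib

set_option maxHeartbeats 1000000

open Polynomial TensorProduct

private lemma addPowP {p : ℕ} (hp : p.Prime) {S : Type*} [CommRing S] (hS : (p : S) = 0)
    (x y : S) : (x + y) ^ p = x ^ p + y ^ p := by
  rw [add_pow_prime_eq hp, hS]; simp

private lemma subPowP {p : ℕ} (hp : p.Prime) {S : Type*} [CommRing S] (hS : (p : S) = 0)
    (x y : S) : (x - y) ^ p = x ^ p - y ^ p := by
  have hneg : (-1 : S) ^ p = -1 := by
    rcases hp.eq_two_or_odd' with h2 | hodd
    · subst h2
      have h20 : (2 : S) = 0 := by exact_mod_cast hS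
      rw [neg_one_sq]
      linear_combination h20
    · exact hodd.neg_one_pow
  rw [sub_eq_add_neg, addPowP hp hS, neg_pow, hneg, neg_one_mul, ← sub_eq_add_neg]

private lemma castPZero {p : ℕ} (R : Type*) [CommRing R] [CharP R p]
    {S : Type*} [CommRing S] [Algebra R S] : (p : S) = 0 := by
  rw [← map_natCast (algebraMap R S) p, CharP.cast_eq_zero R p, map_zero]

private lemma quotPolyExt {R : Type*} [CommRing R] (I : Ideal (Polynomial R))
    {S : Type*} [Semiring S] [Algebra R S]
    (F G : (Polynomial R ⧸ I) →ₐ[R] S)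
    (hx : F (Ideal.Quotient.mk I X) = G (Ideal.Quotient.mk I X)) : F = G := by
  have key : F.comp (Ideal.Quotient.mkₐ R I) = G.comp (Ideal.Quotient.mkₐ R I) :=
    Polynomial.algHom_ext (by simpa using hx)
  ext y
  obtain ⟨z, rfl⟩ := Ideal.Quotient.mk_surjective y
  exact DFunLike.congr_fun key z

/-- For `C̃ = R[X]/(X^p - c)` with the `B̃ = R[T]/(T^p)`-coaction
`ρ(X) = X⊗1 + a⊗T + λX⊗T`, if `a^p + λ^p c` is a unit, the canonical (Galois) map
`C̃ ⊗_R C̃ → C̃ ⊗_R B̃` determined by `X⊗1 ↦ X⊗1`, `1⊗X ↦ X⊗1 + a⊗T + λX⊗T` is an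
isomorphism of `R`-algebras (so `C̃` — free of rank `p`, hence faithfully flat — is a
`Γ^{(λ)}`-torsor). -/
theorem stmt18 (p : ℕ) [Fact p.Prime]
    (R : Type*) [CommRing R] [CharP R p] (lam a c : R)
    (h : IsUnit (a ^ p + lam ^ p * c)) :
    let Ct := Polynomial R ⧸ Ideal.span {(X : Polynomial R) ^ p - Polynomial.C c}
    let Bt := Polynomial R ⧸ Ideal.span {(X : Polynomial R) ^ p}
    let x : Ct := Ideal.Quotient.mk _ X
    let t : Bt := Ideal.Quotient.mk _ X
    ∃ e : (Ct ⊗[R] Ct) ≃ₐ[R] (Ct ⊗[R] Bt),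
      e (x ⊗ₜ[R] 1) = x ⊗ₜ[R] 1 ∧
      e (1 ⊗ₜ[R] x) = x ⊗ₜ[R] 1 + (algebraMap R Ct a) ⊗ₜ[R] t
          + (algebraMap R Ct lam * x) ⊗ₜ[R] t := by
  intro Ct Bt x t
  have hp : p.Prime := Fact.out
  have hpCt : (p : Ct) = 0 := castPZero R
  have hpCC : (p : Ct ⊗[R] Ct) = 0 := castPZero R (S := Ct ⊗[R] Ct)
  have hpCB : (p : Ct ⊗[R] Bt) = 0 := castPZero R (S := Ct ⊗[R] Bt)
  -- basic relations
  have halg : ∀ r : R, algebraMap R Ct r =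
      Ideal.Quotient.mk (Ideal.span {(X : Polynomial R) ^ p - Polynomial.C c}) (C r) := by
    intro r; rfl
  have hx : x ^ p = algebraMap R Ct c := by
    have : Ideal.Quotient.mk (Ideal.span {(X : Polynomial R) ^ p - Polynomial.C c})
        ((X : Polynomial R) ^ p - Polynomial.C c) = 0 :=
      Ideal.Quotient.eq_zero_iff_mem.mpr (Ideal.subset_span rfl)
    rw [map_sub, map_pow, sub_eq_zero] at this
    simpa [halg] using this
  have ht : t ^ p = 0 := by
    have : Ideal.Quotient.mk (Ideal.span {(X : Polynomial R) ^ p})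
        ((X : Polynomial R) ^ p) = 0 :=
      Ideal.Quotient.eq_zero_iff_mem.mpr (Ideal.subset_span rfl)
    rwa [map_pow] at this
  -- the unit u = a + λ x
  set u : Ct := algebraMap R Ct a + algebraMap R Ct lam * x with hu_def
  have hup : u ^ p = algebraMap R Ct (a ^ p + lam ^ p * c) := by
    rw [hu_def, addPowP hp hpCt, mul_pow, hx, map_add, map_mul, map_pow, map_pow]
  have hu : IsUnit u := by
    have : IsUnit (u ^ p) := hup ▸ h.map (algebraMap R Ct)
    exact (isUnit_pow_iff hp.ne_zero).mp this
  obtain ⟨v, hv⟩ := isUnit_iff_exists_inv.mp hu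
  -- the element s and the forward map
  set s : Ct ⊗[R] Bt := x ⊗ₜ[R] 1 + u ⊗ₜ[R] t with hs_def
  have hsp : s ^ p = @algebraMap R (Ct ⊗[R] Bt) _ Algebra.TensorProduct.instSemiring _ c := by
    rw [hs_def, addPowP (S := Ct ⊗[R] Bt) hp hpCB, Algebra.TensorProduct.tmul_pow,
      Algebra.TensorProduct.tmul_pow, ht, tmul_zero, add_zero, one_pow, hx,
      Algebra.TensorProduct.algebraMap_apply]
  letI : CommRing Ct := inferInstance
  letI : CommRing Bt := inferInstance
  letI : Algebra R Ct := inferInstance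
  letI : Algebra R Bt := inferInstance
  have hskey : ∀ q ∈ Ideal.span {(X : Polynomial R) ^ p - Polynomial.C c},
      aeval s q = 0 := by
    intro q hq
    obtain ⟨r, rfl⟩ := Ideal.mem_span_singleton.mp hq
    rw [map_mul, map_sub, map_pow, aeval_X, aeval_C, hsp, sub_self]
    ring
  set f₂ : Ct →ₐ[R] Ct ⊗[R] Bt := Ideal.Quotient.liftₐ _ (aeval s) hskey with hf₂_def
  have hf₂x : f₂ x = s := by
    have h0 := DFunLike.congr_fun (Ideal.Quotient.liftₐ_comp _ (aeval s) hskey) (X : Polynomial R)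
    simp only [AlgHom.comp_apply, Ideal.Quotient.mkₐ_eq_mk, aeval_X] at h0
    exact h0
  set φ : (Ct ⊗[R] Ct) →ₐ[R] (Ct ⊗[R] Bt) :=
    Algebra.TensorProduct.productMap (S := Ct ⊗[R] Bt) (Algebra.TensorProduct.includeLeft) f₂
    with hφ_def
  -- the element w and the inverse map
  set w : Ct ⊗[R] Ct := ((1 : Ct) ⊗ₜ[R] x - x ⊗ₜ[R] (1 : Ct)) * (v ⊗ₜ[R] 1) with hw_def
  have h1x : ((1 : Ct) ⊗ₜ[R] x) ^ p = (x ⊗ₜ[R] (1 : Ct)) ^ p := by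
    rw [Algebra.TensorProduct.tmul_pow, Algebra.TensorProduct.tmul_pow, one_pow, hx,
      Algebra.algebraMap_eq_smul_one, tmul_smul, TensorProduct.smul_tmul']
  have hd : ((1 : Ct) ⊗ₜ[R] x - x ⊗ₜ[R] (1 : Ct)) ^ p = 0 := by
    have hsub := subPowP (S := Ct ⊗[R] Ct) hp hpCC ((1 : Ct) ⊗ₜ[R] x) (x ⊗ₜ[R] (1 : Ct))
    rw [hsub, h1x, sub_self]
  have hwp : w ^ p = 0 := by
    rw [hw_def]
    have hmp := mul_pow ((1 : Ct) ⊗ₜ[R] x - x ⊗ₜ[R] (1 : Ct)) (v ⊗ₜ[R] (1 : Ct)) p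
    rw [hmp, hd]
    ring
  have hwkey : ∀ q ∈ Ideal.span {(X : Polynomial R) ^ p}, aeval w q = 0 := by
    intro q hq
    obtain ⟨r, rfl⟩ := Ideal.mem_span_singleton.mp hq
    rw [map_mul, map_pow, aeval_X, hwp]
    ring
  set g₂ : Bt →ₐ[R] Ct ⊗[R] Ct := Ideal.Quotient.liftₐ _ (aeval w) hwkey with hg₂_def
  have hg₂t : g₂ t = w := by
    have h0 := DFunLike.congr_fun (Ideal.Quotient.liftₐ_comp _ (aeval w) hwkey) (X : Polynomial R)
    simp only [AlgHom.comp_apply, Ideal.Quotient.mkₐ_eq_mk, aeval_X] at h0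
    exact h0
  set ψ : (Ct ⊗[R] Bt) →ₐ[R] (Ct ⊗[R] Ct) :=
    Algebra.TensorProduct.productMap (S := Ct ⊗[R] Ct) (Algebra.TensorProduct.includeLeft) g₂
    with hψ_def
  -- basic values
  have hφleft : ∀ y : Ct, φ (y ⊗ₜ[R] 1) = y ⊗ₜ[R] 1 := by
    intro y
    rw [hφ_def, Algebra.TensorProduct.productMap_apply_tmul, map_one,
      Algebra.TensorProduct.includeLeft_apply]
    ring
  have hψleft : ∀ y : Ct, ψ (y ⊗ₜ[R] 1) = y ⊗ₜ[R] 1 := by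
    intro y
    rw [hψ_def, Algebra.TensorProduct.productMap_apply_tmul, map_one,
      Algebra.TensorProduct.includeLeft_apply]
    ring
  have hφright : φ ((1 : Ct) ⊗ₜ[R] x) = s := by
    rw [hφ_def, Algebra.TensorProduct.productMap_apply_tmul, map_one, hf₂x]
    ring
  have hψright : ψ ((1 : Ct) ⊗ₜ[R] t) = w := by
    rw [hψ_def, Algebra.TensorProduct.productMap_apply_tmul, map_one, hg₂t]
    ring
  -- mutual inverses
  have hcomp1 : φ.comp ψ = AlgHom.id R (Ct ⊗[R] Bt) := by
    apply Algebra.TensorProduct.ext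
    · apply quotPolyExt
      simp only [AlgHom.comp_apply, AlgHom.coe_restrictScalars', AlgHom.id_apply,
        Algebra.TensorProduct.includeLeft_apply]
      rw [show (Ideal.Quotient.mk (Ideal.span {(X : Polynomial R) ^ p - Polynomial.C c}) X) = x
        from rfl, hψleft, hφleft]
    · apply quotPolyExt
      simp only [AlgHom.comp_apply, AlgHom.coe_restrictScalars', AlgHom.restrictScalars_apply,
        AlgHom.id_apply, Algebra.TensorProduct.includeRight_apply]
      rw [show (Ideal.Quotient.mk (Ideal.span {(X : Polynomial R) ^ p}) X) = t from rfl,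
        hψright, hw_def, map_mul, map_sub, hφright, hφleft, hs_def, add_sub_cancel_left, hφleft,
        Algebra.TensorProduct.tmul_mul_tmul, hv]
      ring
  have hcomp2 : ψ.comp φ = AlgHom.id R (Ct ⊗[R] Ct) := by
    apply Algebra.TensorProduct.ext
    · apply quotPolyExt
      simp only [AlgHom.comp_apply, AlgHom.coe_restrictScalars', AlgHom.id_apply,
        Algebra.TensorProduct.includeLeft_apply]
      rw [show (Ideal.Quotient.mk (Ideal.span {(X : Polynomial R) ^ p - Polynomial.C c}) X) = x
        from rfl, hφleft, hψleft]
    · apply quotPolyExt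
      simp only [AlgHom.comp_apply, AlgHom.coe_restrictScalars', AlgHom.restrictScalars_apply,
        AlgHom.id_apply, Algebra.TensorProduct.includeRight_apply]
      rw [show (Ideal.Quotient.mk (Ideal.span {(X : Polynomial R) ^ p - Polynomial.C c}) X) = x
        from rfl, hφright, hs_def, map_add, hψleft]
      have hppsi : ψ (u ⊗ₜ[R] t) = (u ⊗ₜ[R] (1 : Ct)) * w := by
        have e1 : u ⊗ₜ[R] t = (u ⊗ₜ[R] (1 : Bt)) * ((1 : Ct) ⊗ₜ[R] t) := by
          rw [Algebra.TensorProduct.tmul_mul_tmul]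
          ring_nf
        rw [e1, map_mul, hψleft, hψright]
      rw [hppsi, hw_def]
      have h4 : (u ⊗ₜ[R] (1 : Ct)) * (v ⊗ₜ[R] (1 : Ct)) = 1 := by
        rw [Algebra.TensorProduct.tmul_mul_tmul, hv, mul_one]
        exact Algebra.TensorProduct.one_def.symm
      linear_combination ((1 : Ct) ⊗ₜ[R] x - x ⊗ₜ[R] (1 : Ct)) * h4
  refine ⟨AlgEquiv.ofAlgHom φ ψ hcomp1 hcomp2, ?_, ?_⟩
  · have hcoe : (AlgEquiv.ofAlgHom φ ψ hcomp1 hcomp2) (x ⊗ₜ[R] 1) = φ (x ⊗ₜ[R] 1) := rfl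
    rw [hcoe]
    exact hφleft x
  · have hcoe : (AlgEquiv.ofAlgHom φ ψ hcomp1 hcomp2) ((1 : Ct) ⊗ₜ[R] x)
        = φ ((1 : Ct) ⊗ₜ[R] x) := rfl
    rw [hcoe, hφright, hs_def, hu_def, add_tmul, add_assoc]
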